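/- The gauge algebra of the truncated deformed abelian Chern–Simons theory remains abelian up to third order in the deformation: for all smooth λ₁, λ₂: ℝ³ → ℝ and every smooth vector field B: ℝ³ → ℝ³, the commutator of deformed gauge variations Cₜ(B) := (d/ds)|_{s=0} δ̂ₜ,λ₂( B + s·δ̂ₜ,λ₁(B) ) − (d/ds)|_{s=0} δ̂ₜ,λ₁( B + s·δ̂ₜ,λ₂(B) ) is a polynomial in t with smooth vector-field coefficients whose coefficients in t-degrees 0, 1 and 2 all vanish. -/

import Mathlib

/- STATEMENT 11: the gauge algebra of the truncated deformed abelian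
Chern–Simons theory remains abelian up to third order in t: the commutator of
deformed gauge variations
Cₜ(B) = (d/ds)|₀ δ̂ₜ,λ₂(B + s δ̂ₜ,λ₁(B)) − (d/ds)|₀ δ̂ₜ,λ₁(B + s δ̂ₜ,λ₂(B))
is a polynomial in t with smooth vector-field coefficients whose coefficients
in t-degrees 0, 1, 2 vanish. -/

noncomputable section

abbrev V3 := Fin 3 → ℝ

/-- Partial derivative ∂_i f at x. -/
def pd (f : V3 → ℝ) (i : Fin 3) (x : V3) : ℝ :=
  fderiv ℝ f x (Pi.single i 1)

/-- Truncated deformed gauge transformation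
  δ̂ₜ,λ(B) = ∇λ − t(v·B)∇λ − t(v·∇λ)B − ½t²(v·B)²∇λ. -/
def hdelta (v : V3) (t : ℝ) (lam : V3 → ℝ) (B : V3 → V3) : V3 → V3 :=
  fun x a => pd lam a x - t * (∑ i, v i * B x i) * pd lam a x
    - t * (∑ i, v i * pd lam i x) * B x a
    - (1 / 2) * t ^ 2 * (∑ i, v i * B x i) ^ 2 * pd lam a x

lemma pd_smooth {lam : V3 → ℝ} (h : ContDiff ℝ (⊤ : ℕ∞) lam) (i : Fin 3) :
    ContDiff ℝ (⊤ : ℕ∞) (pd lam i) := by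
  unfold pd
  exact (h.fderiv_right (by simp)).clm_apply contDiff_const

lemma vdot_hdelta (v : V3) (t : ℝ) (lam : V3 → ℝ) (B : V3 → V3) (x : V3) :
    (∑ i, v i * hdelta v t lam B x i)
      = (∑ i, v i * pd lam i x) *
        (1 - 2 * t * (∑ i, v i * B x i)
          - (1 / 2) * t ^ 2 * (∑ i, v i * B x i) ^ 2) := by
  calc (∑ i, v i * hdelta v t lam B x i)
      = ∑ i, ((1 - t * (∑ j, v j * B x j)
            - (1 / 2) * t ^ 2 * (∑ j, v j * B x j) ^ 2) * (v i * pd lam i x)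
          - (t * (∑ j, v j * pd lam j x)) * (v i * B x i)) :=
        Finset.sum_congr rfl (fun i _ => by simp only [hdelta]; ring)
    _ = _ := by
        rw [Finset.sum_sub_distrib, ← Finset.mul_sum, ← Finset.mul_sum]; ring

lemma deriv_hdelta (v : V3) (t : ℝ) (lam mu : V3 → ℝ) (B : V3 → V3) (x : V3) (a : Fin 3) :
    deriv (fun s : ℝ =>
        hdelta v t lam (fun y b => B y b + s * hdelta v t mu B y b) x a) 0
      = - t * (∑ i, v i * hdelta v t mu B x i) * pd lam a x
        - t * (∑ i, v i * pd lam i x) * hdelta v t mu B x a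
        - t ^ 2 * (∑ i, v i * B x i) * (∑ i, v i * hdelta v t mu B x i)
            * pd lam a x := by
  have hsum : ∀ s : ℝ, (∑ i, v i * (B x i + s * hdelta v t mu B x i))
      = (∑ i, v i * B x i) + s * (∑ i, v i * hdelta v t mu B x i) := by
    intro s
    simp only [mul_add, Finset.sum_add_distrib]
    congr 1
    rw [Finset.mul_sum]
    exact Finset.sum_congr rfl (fun i _ => by ring)
  have hfun : (fun s : ℝ =>
      hdelta v t lam (fun y b => B y b + s * hdelta v t mu B y b) x a)
      = fun s : ℝ => pd lam a x
          - t * ((∑ i, v i * B x i) + s * (∑ i, v i * hdelta v t mu B x i)) * pd lam a x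
          - t * (∑ i, v i * pd lam i x) * (B x a + s * hdelta v t mu B x a)
          - (1 / 2) * t ^ 2 *
              ((∑ i, v i * B x i) + s * (∑ i, v i * hdelta v t mu B x i)) ^ 2
            * pd lam a x := by
    funext s
    show pd lam a x
        - t * (∑ i, v i * (B x i + s * hdelta v t mu B x i)) * pd lam a x
        - t * (∑ i, v i * pd lam i x) * (B x a + s * hdelta v t mu B x a)
        - (1 / 2) * t ^ 2 * (∑ i, v i * (B x i + s * hdelta v t mu B x i)) ^ 2
          * pd lam a x = _
    rw [hsum s]
  have h1 : HasDerivAt (fun s : ℝ => (∑ i, v i * B x i)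
      + s * (∑ i, v i * hdelta v t mu B x i)) (∑ i, v i * hdelta v t mu B x i) 0 := by
    simpa using ((hasDerivAt_id 0).mul_const (∑ i, v i * hdelta v t mu B x i)).const_add
      (∑ i, v i * B x i)
  have h2 : HasDerivAt (fun s : ℝ => B x a + s * hdelta v t mu B x a)
      (hdelta v t mu B x a) 0 := by
    simpa using ((hasDerivAt_id 0).mul_const (hdelta v t mu B x a)).const_add (B x a)
  have HA := (h1.const_mul t).mul_const (pd lam a x)
  have HB := h2.const_mul (t * (∑ i, v i * pd lam i x))
  have HC := ((h1.pow 2).const_mul ((1 / 2) * t ^ 2)).mul_const (pd lam a x)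
  have H := (((hasDerivAt_const (0 : ℝ) (pd lam a x)).sub HA).sub HB).sub HC
  rw [hfun]
  refine H.deriv.trans ?_
  simp only [Nat.cast_ofNat, pow_one, zero_mul, add_zero, zero_sub]
  ring

theorem truncated_deformed_CS_gauge_algebra_abelian
    (v : V3) (lam₁ lam₂ : V3 → ℝ) (B : V3 → V3)
    (h1 : ContDiff ℝ (⊤ : ℕ∞) lam₁) (h2 : ContDiff ℝ (⊤ : ℕ∞) lam₂)
    (hB : ContDiff ℝ (⊤ : ℕ∞) B) :
    ∃ (N : ℕ) (c : ℕ → V3 → V3),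
      (∀ k, ContDiff ℝ (⊤ : ℕ∞) (c k)) ∧
      (∀ (t : ℝ) (x : V3) (a : Fin 3),
        deriv (fun s : ℝ =>
            hdelta v t lam₂ (fun y b => B y b + s * hdelta v t lam₁ B y b) x a) 0
          - deriv (fun s : ℝ =>
              hdelta v t lam₁ (fun y b => B y b + s * hdelta v t lam₂ B y b) x a) 0
        = ∑ k ∈ Finset.range (N + 1), c k x a * t ^ k) ∧
      c 0 = 0 ∧ c 1 = 0 ∧ c 2 = 0 := by
  set c3 : V3 → V3 := fun x a =>
    2 * (∑ i, v i * B x i) ^ 2 *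
      ((∑ i, v i * pd lam₁ i x) * pd lam₂ a x
        - (∑ i, v i * pd lam₂ i x) * pd lam₁ a x) with hc3
  set c4 : V3 → V3 := fun x a =>
    (1 / 2) * (∑ i, v i * B x i) ^ 3 *
      ((∑ i, v i * pd lam₁ i x) * pd lam₂ a x
        - (∑ i, v i * pd lam₂ i x) * pd lam₁ a x) with hc4
  refine ⟨4, fun k => if k = 3 then c3 else if k = 4 then c4 else 0, ?_, ?_, ?_, ?_, ?_⟩
  · -- smoothness
    have hbb : ContDiff ℝ (⊤ : ℕ∞) (fun x => ∑ i, v i * B x i) :=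
      ContDiff.sum fun i _ => contDiff_const.mul ((contDiff_pi.mp hB) i)
    have hg1 : ContDiff ℝ (⊤ : ℕ∞) (fun x => ∑ i, v i * pd lam₁ i x) :=
      ContDiff.sum fun i _ => contDiff_const.mul (pd_smooth h1 i)
    have hg2 : ContDiff ℝ (⊤ : ℕ∞) (fun x => ∑ i, v i * pd lam₂ i x) :=
      ContDiff.sum fun i _ => contDiff_const.mul (pd_smooth h2 i)
    intro k
    dsimp only
    split_ifs
    · exact contDiff_pi.mpr fun a =>
        (contDiff_const.mul (hbb.pow 2)).mul
          ((hg1.mul (pd_smooth h2 a)).sub (hg2.mul (pd_smooth h1 a)))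
    · exact contDiff_pi.mpr fun a =>
        (contDiff_const.mul (hbb.pow 3)).mul
          ((hg1.mul (pd_smooth h2 a)).sub (hg2.mul (pd_smooth h1 a)))
    · exact contDiff_const
  · intro t x a
    rw [deriv_hdelta v t lam₂ lam₁ B x a, deriv_hdelta v t lam₁ lam₂ B x a,
      vdot_hdelta v t lam₁ B x, vdot_hdelta v t lam₂ B x]
    simp only [hdelta, hc3, hc4, Finset.sum_range_succ, Finset.sum_range_zero,
      Pi.zero_apply]
    norm_num
    ring
  · simp
  · simp
  · simp
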